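/- There exists a bounded operator C : K → H such that the operator matrix M_C = [[A, C],[0, B]] is invertible if and only if A is left invertible, B is right invertible (surjective), and dim ker(B) = dim coker(A). -/

import Mathlib

open ContinuousLinearMap Cardinal

noncomputable section

universe u

/-- nullity: dimension of the kernel, as a cardinal -/
def alphaDim {E F : Type u} [NormedAddCommGroup E] [NormedSpace ℂ E]
    [NormedAddCommGroup F] [NormedSpace ℂ F] (T : E →L[ℂ] F) : Cardinal :=
  Module.rank ℂ (LinearMap.ker (T : E →ₗ[ℂ] F))

/-- deficiency: dimension of the cokernel, as a cardinal -/
def betaDim {E F : Type u} [NormedAddCommGroup E] [NormedSpace ℂ E]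
    [NormedAddCommGroup F] [NormedSpace ℂ F] (T : E →L[ℂ] F) : Cardinal :=
  Module.rank ℂ (F ⧸ LinearMap.range (T : E →ₗ[ℂ] F))

/-- the upper triangular operator matrix [[A, C],[0, B]] acting on H ⊕ K -/
def MC {H K : Type u} [NormedAddCommGroup H] [NormedSpace ℂ H]
    [NormedAddCommGroup K] [NormedSpace ℂ K]
    (A : H →L[ℂ] H) (B : K →L[ℂ] K) (C : K →L[ℂ] H) : (H × K) →L[ℂ] (H × K) :=
  (A.comp (fst ℂ H K) + C.comp (snd ℂ H K)).prod (B.comp (snd ℂ H K))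

/-- T - λ -/
def shf {E : Type u} [NormedAddCommGroup E] [NormedSpace ℂ E]
    (T : E →L[ℂ] E) (l : ℂ) : E →L[ℂ] E := T - l • ContinuousLinearMap.id ℂ E

/-- Fredholm left invertible spectrum -/
def sigmaFLI {E : Type u} [NormedAddCommGroup E] [NormedSpace ℂ E]
    (T : E →L[ℂ] E) : Set ℂ :=
  {l | ¬ (Function.Injective (shf T l) ∧ betaDim (shf T l) < ℵ₀)}

/-- Fredholm right invertible spectrum -/
def sigmaFRI {E : Type u} [NormedAddCommGroup E] [NormedSpace ℂ E]
    (T : E →L[ℂ] E) : Set ℂ :=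
  {l | ¬ (Function.Surjective (shf T l) ∧ alphaDim (shf T l) < ℵ₀)}

/-- polynomially convex hull: the set together with the bounded components of its complement -/
def polyHull (S : Set ℂ) : Set ℂ :=
  S ∪ {z | z ∉ S ∧ Bornology.IsBounded (connectedComponentIn Sᶜ z)}

variable {H K : Type u}
  [NormedAddCommGroup H] [InnerProductSpace ℂ H] [CompleteSpace H]
  [NormedAddCommGroup K] [InnerProductSpace ℂ K] [CompleteSpace K]

section Helpers

lemma MC_apply {H K : Type u} [NormedAddCommGroup H] [NormedSpace ℂ H]
    [NormedAddCommGroup K] [NormedSpace ℂ K]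
    (A : H →L[ℂ] H) (B : K →L[ℂ] K) (C : K →L[ℂ] H) (x : H) (y : K) :
    MC A B C (x, y) = (A x + C y, B y) := rfl

variable {E F : Type u} [NormedAddCommGroup E] [InnerProductSpace ℂ E]
  [NormedAddCommGroup F] [InnerProductSpace ℂ F]

lemma countable_of_orthonormal [TopologicalSpace.SeparableSpace E]
    {ι : Type u} {v : ι → E} (hv : Orthonormal ℂ v) : Countable ι := by
  obtain ⟨D, hDc, hDd⟩ := TopologicalSpace.exists_countable_dense E
  haveI := hDc.to_subtype
  have hsep : ∀ i j : ι, i ≠ j → (1 : ℝ) ≤ dist (v i) (v j) := by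
    intro i j hij
    have h2 : ‖v i - v j‖ ^ 2 = 2 := by
      rw [@norm_sub_sq ℂ, hv.2 hij, hv.1 i, hv.1 j]; norm_num
    have h1 : (1:ℝ) ≤ ‖v i - v j‖ := by nlinarith [norm_nonneg (v i - v j)]
    rwa [dist_eq_norm]
  have hchoice : ∀ i : ι, ∃ d : D, dist (v i) (d : E) < 1/2 := by
    intro i
    obtain ⟨d, hd, hlt⟩ := Metric.mem_closure_iff.mp (hDd.closure_eq ▸ Set.mem_univ (v i) :
      v i ∈ closure D) (1/2) (by norm_num)
    exact ⟨⟨d, hd⟩, hlt⟩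
  choose f hf using hchoice
  have hinj : Function.Injective f := by
    intro i j hij
    by_contra h
    have h3 : dist (v i) (v j) < 1 := by
      calc dist (v i) (v j) ≤ dist (v i) ↑(f i) + dist ↑(f i) (v j) := dist_triangle _ _ _
        _ = dist (v i) ↑(f i) + dist (v j) ↑(f j) := by rw [hij, dist_comm (↑(f j)) (v j)]
        _ < 1/2 + 1/2 := add_lt_add (hf i) (hf j)
        _ = 1 := by norm_num
    linarith [hsep i j h]
  exact hinj.countable

lemma fd_of_finite_hb [CompleteSpace E] {ι : Type u} (b : HilbertBasis ι ℂ E) [Finite ι] :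
    FiniteDimensional ℂ E := by
  have hfd := FiniteDimensional.span_of_finite ℂ (Set.finite_range ⇑b)
  have hcl := Submodule.closed_of_finiteDimensional (Submodule.span ℂ (Set.range ⇑b))
  have htop : Submodule.span ℂ (Set.range ⇑b) = ⊤ := by
    have hd := b.dense_span
    rwa [hcl.submodule_topologicalClosure_eq] at hd
  rw [htop] at hfd
  exact Module.Finite.equiv (LinearEquiv.ofTop _ rfl)

/-- Two separable Hilbert spaces with the same algebraic rank are isomorphic. -/
lemma hilbert_iso_of_rank_eq [CompleteSpace E] [CompleteSpace F]
    [TopologicalSpace.SeparableSpace E] [TopologicalSpace.SeparableSpace F]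
    (h : Module.rank ℂ E = Module.rank ℂ F) : Nonempty (E ≃L[ℂ] F) := by
  by_cases hE : FiniteDimensional ℂ E
  · have hF : FiniteDimensional ℂ F :=
      Module.rank_lt_aleph0_iff.mp (h ▸ Module.rank_lt_aleph0 ℂ E)
    have hfr : Module.finrank ℂ E = Module.finrank ℂ F := by
      simp only [Module.finrank, h]
    exact ⟨(LinearEquiv.ofFinrankEq _ _ hfr).toContinuousLinearEquiv⟩
  · have hF : ¬ FiniteDimensional ℂ F := by
      intro hF
      exact hE (Module.rank_lt_aleph0_iff.mp (h ▸ Module.rank_lt_aleph0 ℂ F))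
    obtain ⟨w1, b1, _⟩ := exists_hilbertBasis ℂ E
    obtain ⟨w2, b2, _⟩ := exists_hilbertBasis ℂ F
    haveI : Countable w1 := countable_of_orthonormal b1.orthonormal
    haveI : Countable w2 := countable_of_orthonormal b2.orthonormal
    haveI : Infinite ↥w1 := by
      by_contra hfin
      rw [not_infinite_iff_finite] at hfin
      exact hE (fd_of_finite_hb b1)
    haveI : Infinite ↥w2 := by
      by_contra hfin
      rw [not_infinite_iff_finite] at hfin
      exact hF (fd_of_finite_hb b2)
    obtain ⟨d1⟩ := nonempty_denumerable ↥w1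
    obtain ⟨d2⟩ := nonempty_denumerable ↥w2
    let e : ↥w1 ≃ ↥w2 := (Denumerable.eqv ↥w1).trans (Denumerable.eqv ↥w2).symm
    have hv : Orthonormal ℂ (⇑b2 ∘ ⇑e) := b2.orthonormal.comp ⇑e e.injective
    have hsp : ⊤ ≤ (Submodule.span ℂ (Set.range (⇑b2 ∘ ⇑e))).topologicalClosure := by
      have hr : Set.range (⇑b2 ∘ ⇑e) = Set.range ⇑b2 := by
        rw [Set.range_comp, e.surjective.range_eq, Set.image_univ]
      rw [hr, b2.dense_span]
    let b2' : HilbertBasis ↥w1 ℂ F := HilbertBasis.mk hv hsp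
    exact ⟨(b1.repr.trans b2'.repr.symm).toContinuousLinearEquiv⟩

end Helpers

theorem stmt_13
  [TopologicalSpace.SeparableSpace H] [TopologicalSpace.SeparableSpace K]
    (hH : ¬ FiniteDimensional ℂ H) (hK : ¬ FiniteDimensional ℂ K)
    (A : H →L[ℂ] H) (B : K →L[ℂ] K) :
    (∃ C : K →L[ℂ] H, Function.Bijective (MC A B C)) ↔
      (Function.Injective A ∧ IsClosed (Set.range A)) ∧ Function.Surjective B ∧
        alphaDim B = betaDim A := by
  constructor
  · rintro ⟨C, hC⟩
    -- forward direction
    have hinjA : Function.Injective A := by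
      intro x y hxy
      have : MC A B C (x, 0) = MC A B C (y, 0) := by
        simp [MC_apply, hxy]
      exact congrArg Prod.fst (hC.1 this)
    have hsurjB : Function.Surjective B := by
      intro v
      obtain ⟨⟨x, y⟩, hxy⟩ := hC.2 (0, v)
      exact ⟨y, congrArg Prod.snd (hxy : _ = (_, _) )⟩
    -- the inverse is continuous
    let eMC : (H × K) ≃L[ℂ] (H × K) :=
      ContinuousLinearEquiv.ofBijective (MC A B C)
        (LinearMap.ker_eq_bot.mpr hC.1) (LinearMap.range_eq_top.mpr hC.2)
    have heMC : ∀ p, eMC p = MC A B C p := fun p => rfl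
    have hclA : IsClosed (Set.range A) := by
      have hb : ∀ x : H, ‖x‖ ≤ ‖(eMC.symm : (H × K) →L[ℂ] (H × K))‖₊ * ‖A x‖ := by
        intro x
        have h1 : eMC.symm (eMC (x, 0)) = (x, 0) := eMC.symm_apply_apply _
        have h2 : eMC (x, 0) = (A x, (0 : K)) := by rw [heMC]; simp [MC_apply]
        have h3 : ‖eMC.symm (eMC (x, 0))‖ ≤ ‖(eMC.symm : (H × K) →L[ℂ] (H × K))‖ * ‖eMC (x, 0)‖ :=
          (eMC.symm : (H × K) →L[ℂ] (H × K)).le_opNorm _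
        rw [h1, h2] at h3
        simpa [Prod.norm_def] using h3
      have hal : AntilipschitzWith ‖(eMC.symm : (H × K) →L[ℂ] (H × K))‖₊ ⇑A :=
        AddMonoidHomClass.antilipschitz_of_bound A hb
      exact hal.isClosed_range A.uniformContinuous
    refine ⟨⟨hinjA, hclA⟩, hsurjB, ?_⟩
    -- rank equality via the explicit linear equivalence k ↦ [C k]
    let φ : ↥(LinearMap.ker (B : K →ₗ[ℂ] K)) →ₗ[ℂ] H ⧸ LinearMap.range (A : H →ₗ[ℂ] H) :=
      (LinearMap.range (A : H →ₗ[ℂ] H)).mkQ ∘ₗ (C : K →ₗ[ℂ] H) ∘ₗ (LinearMap.ker (B : K →ₗ[ℂ] K)).subtype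
    have hφinj : Function.Injective φ := by
      rw [← LinearMap.ker_eq_bot, LinearMap.ker_eq_bot']
      rintro ⟨y, hy⟩ hm
      have hCy : C y ∈ LinearMap.range (A : H →ₗ[ℂ] H) := by
        have : Submodule.Quotient.mk (C y) = (0 : H ⧸ LinearMap.range (A : H →ₗ[ℂ] H)) := hm
        exact (Submodule.Quotient.mk_eq_zero _).mp this
      obtain ⟨x, hx⟩ := hCy
      have hz : MC A B C (-x, y) = MC A B C (0, 0) := by
        simp [MC_apply]; exact ⟨by rw [← hx]; simp, hy⟩
      have := hC.1 hz
      have hy0 : y = 0 := congrArg Prod.snd this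
      exact Subtype.ext hy0
    have hφsurj : Function.Surjective φ := by
      intro q
      obtain ⟨w, rfl⟩ := (LinearMap.range (A : H →ₗ[ℂ] H)).mkQ_surjective q
      obtain ⟨⟨x, y⟩, hxy⟩ := hC.2 (w, 0)
      rw [MC_apply] at hxy
      have h1 : A x + C y = w := congrArg Prod.fst hxy
      have h2 : B y = 0 := congrArg Prod.snd hxy
      refine ⟨⟨y, LinearMap.mem_ker.mpr h2⟩, ?_⟩
      show Submodule.Quotient.mk (C y) = Submodule.Quotient.mk w
      rw [← h1]
      refine (Submodule.Quotient.eq _).mpr ?_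
      simpa using LinearMap.mem_range_self (A : H →ₗ[ℂ] H) x
    exact LinearEquiv.rank_eq (LinearEquiv.ofBijective φ ⟨hφinj, hφsurj⟩)
  · rintro ⟨⟨hinj, hcl⟩, hsurj, hrank⟩
    -- backward direction
    haveI : SecondCountableTopology H := UniformSpace.secondCountable_of_separable H
    haveI : SecondCountableTopology K := UniformSpace.secondCountable_of_separable K
    set R : Submodule ℂ H := LinearMap.range (A : H →ₗ[ℂ] H) with hR
    set N : Submodule ℂ K := LinearMap.ker (B : K →ₗ[ℂ] K) with hN
    have hclR : IsClosed (R : Set H) := by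
      have : (R : Set H) = Set.range ⇑A := by
        ext x; simp [hR, LinearMap.mem_range, Set.mem_range]
      rw [this]; exact hcl
    haveI : CompleteSpace R := hclR.completeSpace_coe
    haveI : CompleteSpace N := (isClosed_ker B).completeSpace_coe
    -- rank of N equals rank of Rᗮ
    have hq : Module.rank ℂ (H ⧸ R) = Module.rank ℂ ↥Rᗮ :=
      LinearEquiv.rank_eq
        (Submodule.quotientEquivOfIsCompl R Rᗮ Submodule.isCompl_orthogonal_of_hasOrthogonalProjection)
    have hrk : Module.rank ℂ ↥N = Module.rank ℂ ↥Rᗮ := by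
      have h1 : Module.rank ℂ ↥N = Module.rank ℂ (H ⧸ R) := hrank
      rw [h1, hq]
    obtain ⟨J⟩ := hilbert_iso_of_rank_eq hrk
    let C : K →L[ℂ] H := Rᗮ.subtypeL.comp ((J : ↥N →L[ℂ] ↥Rᗮ).comp N.orthogonalProjectionOnto)
    have hCmem : ∀ y : K, C y ∈ Rᗮ := fun y => (J (N.orthogonalProjectionOnto y)).2
    have hCN : ∀ (y : K) (hy : y ∈ N), C y = ↑(J ⟨y, hy⟩) := by
      intro y hy
      have : N.orthogonalProjectionOnto y = ⟨y, hy⟩ :=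
        Submodule.orthogonalProjectionOnto_mem_subspace_eq_self (⟨y, hy⟩ : N)
      simp only [C, ContinuousLinearMap.comp_apply, Submodule.subtypeL_apply,
        ContinuousLinearEquiv.coe_coe, this]
    refine ⟨C, ?_, ?_⟩
    · -- injectivity
      have hker : ∀ p : H × K, MC A B C p = 0 → p = 0 := by
        rintro ⟨x, y⟩ hp
        rw [MC_apply, Prod.mk_eq_zero] at hp
        obtain ⟨h1, h2⟩ := hp
        have hyN : y ∈ N := LinearMap.mem_ker.mpr h2
        have hCy : C y = ↑(J ⟨y, hyN⟩) := hCN y hyN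
        have hAx : A x ∈ R ⊓ Rᗮ := by
          constructor
          · exact LinearMap.mem_range_self _ x
          · have : A x = -C y := eq_neg_of_add_eq_zero_left h1
            rw [this]
            exact Submodule.neg_mem _ (hCmem y)
        have hAx0 : A x = 0 := by
          have := (Submodule.orthogonal_disjoint R).eq_bot ▸ hAx
          simpa [Submodule.mem_bot] using
            (Submodule.orthogonal_disjoint R).le_bot hAx
        have hx0 : x = 0 := hinj (by rw [hAx0, map_zero])
        have hCy0 : C y = 0 := by
          have := h1; rw [hAx0, zero_add] at this; exact this
        have hJ0 : (J ⟨y, hyN⟩ : H) = 0 := by rw [← hCy]; exact hCy0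
        have : J ⟨y, hyN⟩ = 0 := Subtype.ext hJ0
        have hy0 : (⟨y, hyN⟩ : N) = 0 := by
          apply J.injective; rw [this, map_zero]
        have : y = 0 := congrArg Subtype.val hy0
        simp [hx0, this]
      intro p q hpq
      have : MC A B C (p - q) = 0 := by rw [map_sub, hpq, sub_self]
      exact sub_eq_zero.mp (hker _ this)
    · -- surjectivity
      rintro ⟨u, v⟩
      obtain ⟨y₀, hy₀⟩ := hsurj v
      set uR : ↥R := R.orthogonalProjectionOnto u with huR
      have hw : u - ↑uR ∈ Rᗮ := R.sub_starProjection_mem_orthogonal u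
      obtain ⟨x, hx⟩ : ∃ x, A x = ↑uR := uR.2
      set k : ↥N := J.symm ⟨u - ↑uR, hw⟩ with hk
      set p : ↥N := N.orthogonalProjectionOnto y₀ with hp
      set y : K := y₀ - ↑p + ↑k with hy
      refine ⟨(x, y), ?_⟩
      rw [MC_apply]
      have hBy : B y = v := by
        have hBp : B ↑p = 0 := LinearMap.mem_ker.mp p.2
        have hBk : B ↑k = 0 := LinearMap.mem_ker.mp k.2
        rw [hy, map_add, map_sub, hBp, hBk, hy₀, sub_zero, add_zero]
      have hPy : N.orthogonalProjectionOnto y = k := by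
        rw [hy, map_add, map_sub]
        rw [Submodule.orthogonalProjectionOnto_mem_subspace_eq_self p,
          Submodule.orthogonalProjectionOnto_mem_subspace_eq_self k]
        abel
      have hCy : C y = u - ↑uR := by
        simp only [C, ContinuousLinearMap.comp_apply, Submodule.subtypeL_apply,
          ContinuousLinearEquiv.coe_coe, hPy, hk, ContinuousLinearEquiv.apply_symm_apply]
      rw [hCy, hBy, hx]
      simp
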